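/- Let n, k, d be positive integers with k ≤ d ≤ n-1, set r = n-k and s = d+1-k. Let λ_{1,0},...,λ_{1,s-1}, λ_2,...,λ_n be n+s-1 distinct elements of a field F and suppose c_{i,u} ∈ F satisfy λ_{1,u}^t c_{1,u} + Σ_{i=2}^n λ_i^t c_{i,u} = 0 for all u ∈ {0,...,s-1} and t ∈ {0,...,r-1}. Let μ_i = Σ_{u=0}^{s-1} c_{i,u} for i ∈ [n]. Then for any subset R ⊆ {2,...,n} with |R| = d, all the values c_{1,0},...,c_{1,s-1}, μ_2,...,μ_n are uniquely determined by {μ_i : i ∈ R}; that is, if two solutions of the parity-check system have the same values of μ_i for all i ∈ R, they have the same values of c_{1,0},...,c_{1,s-1} and all μ_i. -/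

import Mathlib

open Polynomial in
lemma vand_zero {F : Type*} [Field F] {ι : Type*} [DecidableEq ι]
    (J : Finset ι) (x : ι → F) (hx : Set.InjOn x J) (r : ℕ) (hJ : J.card ≤ r)
    (a : ι → F) (h : ∀ t < r, ∑ j ∈ J, x j ^ t * a j = 0) :
    ∀ j ∈ J, a j = 0 := by
  intro j hj
  set q : F[X] := ∏ l ∈ J.erase j, (X - C (x l)) with hq
  have hdeg : q.natDegree < r := by
    have hd : q.natDegree = (J.erase j).card := by
      rw [hq, Polynomial.natDegree_prod_of_monic _ _ (fun l _ => monic_X_sub_C _)]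
      simp
    have hcard : (J.erase j).card = J.card - 1 := Finset.card_erase_of_mem hj
    have hpos : 0 < J.card := Finset.card_pos.mpr ⟨j, hj⟩
    omega
  have key : ∑ l ∈ J, q.eval (x l) * a l = 0 := by
    have hev : ∀ l ∈ J, q.eval (x l) * a l
        = ∑ t ∈ Finset.range r, q.coeff t * (x l ^ t * a l) := by
      intro l _
      rw [Polynomial.eval_eq_sum_range' hdeg, Finset.sum_mul]
      exact Finset.sum_congr rfl fun t _ => by ring
    rw [Finset.sum_congr rfl hev, Finset.sum_comm]
    refine Finset.sum_eq_zero fun t ht => ?_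
    rw [← Finset.mul_sum, h t (Finset.mem_range.mp ht), mul_zero]
  have hother : ∀ l ∈ J, l ≠ j → q.eval (x l) * a l = 0 := by
    intro l hl hlj
    have : q.eval (x l) = 0 := by
      rw [hq, Polynomial.eval_prod]
      exact Finset.prod_eq_zero (Finset.mem_erase.mpr ⟨hlj, hl⟩) (by simp)
    rw [this, zero_mul]
  rw [Finset.sum_eq_single_of_mem j hj hother] at key
  have hne : q.eval (x j) ≠ 0 := by
    rw [hq, Polynomial.eval_prod]
    refine Finset.prod_ne_zero_iff.mpr fun l hl => ?_
    simp only [eval_sub, eval_X, eval_C, sub_ne_zero]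
    intro hxe
    exact (Finset.mem_erase.mp hl).1 (hx (Finset.mem_erase.mp hl).2 hj hxe.symm)
  exact (mul_eq_zero.mp key).resolve_left hne

theorem stmt6 {F : Type*} [Field F] (n k d : ℕ) (hk : 1 ≤ k) (hkd : k ≤ d) (hdn : d ≤ n - 1)
    (r s : ℕ) (hrdef : r = n - k) (hsdef : s = d + 1 - k)
    (lam1 : Fin s → F) (lam : ℕ → F)
    (h1 : Function.Injective lam1)
    (h2 : Set.InjOn lam ↑(Finset.Icc 2 n))
    (h3 : ∀ u : Fin s, ∀ i ∈ Finset.Icc 2 n, lam1 u ≠ lam i)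
    (c c' : ℕ → Fin s → F)
    (hpar : ∀ u : Fin s, ∀ t < r,
      lam1 u ^ t * c 1 u + ∑ i ∈ Finset.Icc 2 n, lam i ^ t * c i u = 0)
    (hpar' : ∀ u : Fin s, ∀ t < r,
      lam1 u ^ t * c' 1 u + ∑ i ∈ Finset.Icc 2 n, lam i ^ t * c' i u = 0)
    (R : Finset ℕ) (hR : R ⊆ Finset.Icc 2 n) (hRcard : R.card = d)
    (hmuR : ∀ i ∈ R, ∑ u : Fin s, c i u = ∑ u : Fin s, c' i u) :
    (∀ u : Fin s, c 1 u = c' 1 u) ∧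
      ∀ i ∈ Finset.Icc 2 n, ∑ u : Fin s, c i u = ∑ u : Fin s, c' i u := by
  classical
  set ν : ℕ → F := fun i => ∑ u : Fin s, (c i u - c' i u) with hν
  have hνR : ∀ i ∈ R, ν i = 0 := by
    intro i hi
    simp only [hν, Finset.sum_sub_distrib, hmuR i hi, sub_self]
  -- combined equations
  have heq : ∀ t < r,
      (∑ u : Fin s, lam1 u ^ t * (c 1 u - c' 1 u))
        + ∑ i ∈ Finset.Icc 2 n \ R, lam i ^ t * ν i = 0 := by
    intro t ht
    have h4 : ∀ u : Fin s, lam1 u ^ t * (c 1 u - c' 1 u)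
        + ∑ i ∈ Finset.Icc 2 n, lam i ^ t * (c i u - c' i u) = 0 := by
      intro u
      have e1 := hpar u t ht
      have e2 := hpar' u t ht
      have hs : ∑ i ∈ Finset.Icc 2 n, lam i ^ t * (c i u - c' i u)
          = ∑ i ∈ Finset.Icc 2 n, lam i ^ t * c i u
            - ∑ i ∈ Finset.Icc 2 n, lam i ^ t * c' i u := by
        rw [← Finset.sum_sub_distrib]
        exact Finset.sum_congr rfl fun i _ => by ring
      rw [hs]
      linear_combination e1 - e2
    have h6 : (∑ u : Fin s, (lam1 u ^ t * (c 1 u - c' 1 u)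
        + ∑ i ∈ Finset.Icc 2 n, lam i ^ t * (c i u - c' i u))) = 0 :=
      Finset.sum_eq_zero fun u _ => h4 u
    rw [Finset.sum_add_distrib] at h6
    have h7 : ∑ u : Fin s, ∑ i ∈ Finset.Icc 2 n, lam i ^ t * (c i u - c' i u)
        = ∑ i ∈ Finset.Icc 2 n, lam i ^ t * ν i := by
      rw [Finset.sum_comm]
      exact Finset.sum_congr rfl fun i _ => by rw [hν, Finset.mul_sum]
    rw [h7] at h6
    have h8 : ∑ i ∈ Finset.Icc 2 n, lam i ^ t * ν i
        = ∑ i ∈ Finset.Icc 2 n \ R, lam i ^ t * ν i := by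
      rw [← Finset.sum_sdiff hR]
      have : ∑ i ∈ R, lam i ^ t * ν i = 0 :=
        Finset.sum_eq_zero fun i hi => by rw [hνR i hi, mul_zero]
      rw [this, add_zero]
    rw [h8] at h6
    exact h6
  -- set up Vandermonde application
  set J : Finset (Fin s ⊕ ℕ) := Finset.univ.disjSum (Finset.Icc 2 n \ R) with hJdef
  set x : Fin s ⊕ ℕ → F := Sum.elim lam1 lam with hxdef
  set a : Fin s ⊕ ℕ → F := Sum.elim (fun u => c 1 u - c' 1 u) ν with hadef
  have hcardIcc : (Finset.Icc 2 n).card = n - 1 := by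
    rw [Nat.card_Icc]; omega
  have hn : 2 ≤ n := by omega
  have hcardJ : J.card ≤ r := by
    rw [hJdef, Finset.card_disjSum, Finset.card_univ, Fintype.card_fin,
      Finset.card_sdiff_of_subset hR, hcardIcc, hRcard]
    omega
  have hinj : Set.InjOn x J := by
    intro p hp q hq hpq
    have hmem : ∀ z : Fin s ⊕ ℕ, z ∈ J → (∀ i, z = Sum.inr i → i ∈ Finset.Icc 2 n) := by
      intro z hz i hzi
      subst hzi
      rw [hJdef, Finset.mem_disjSum] at hz
      rcases hz with ⟨_, _, habs⟩ | ⟨b, hb, hbe⟩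
      · exact absurd habs (by simp)
      · cases hbe; exact (Finset.mem_sdiff.mp hb).1
    match p, q with
    | Sum.inl u, Sum.inl v => exact congrArg Sum.inl (h1 hpq)
    | Sum.inl u, Sum.inr i =>
        exact absurd hpq (h3 u i (hmem _ hq i rfl))
    | Sum.inr i, Sum.inl u =>
        exact absurd hpq.symm (h3 u i (hmem _ hp i rfl))
    | Sum.inr i, Sum.inr j =>
        exact congrArg Sum.inr (h2 (hmem _ hp i rfl) (hmem _ hq j rfl) hpq)
  have hsys : ∀ t < r, ∑ j ∈ J, x j ^ t * a j = 0 := by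
    intro t ht
    rw [hJdef, Finset.sum_disjSum]
    simpa [hxdef, hadef] using heq t ht
  have hzero := vand_zero J x hinj r hcardJ a hsys
  constructor
  · intro u
    have := hzero (Sum.inl u) (by rw [hJdef, Finset.mem_disjSum]; exact Or.inl ⟨u, Finset.mem_univ u, rfl⟩)
    simpa [hadef, sub_eq_zero] using this
  · intro i hi
    by_cases hiR : i ∈ R
    · exact hmuR i hiR
    · have hmem : (Sum.inr i : Fin s ⊕ ℕ) ∈ J := by
        rw [hJdef, Finset.mem_disjSum]
        exact Or.inr ⟨i, Finset.mem_sdiff.mpr ⟨hi, hiR⟩, rfl⟩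
      have := hzero (Sum.inr i) hmem
      have hν0 : ∑ u : Fin s, (c i u - c' i u) = 0 := by simpa [hadef, hν] using this
      rw [Finset.sum_sub_distrib, sub_eq_zero] at hν0
      exact hν0
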